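/- Let {a_1, …, a_K} be a (K, L, Z) ZCZ set with Z ≥ 2 such that every entry of every a_i has modulus 1, let b_i be a length-N complex sequence, and set c_i = a_i ⊗ b_i (length NL). Then for every shift τ with 0 ≤ τ ≤ N−1, the periodic autocorrelation of c_i satisfies R_{c_i}(τ) = L · C_{b_i}(τ), where C_{b_i} is the aperiodic autocorrelation of b_i. -/

import Mathlib

open Finset

/-- Periodic cross-correlation of two length-`M` complex sequences,
indices taken modulo `M`, defined for all integer shifts `τ`. -/
noncomputable def pcc (M : ℕ) (a b : ℕ → ℂ) (τ : ℤ) : ℂ :=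
  ∑ n ∈ Finset.range M, a n * (starRingEnd ℂ) (b ((((n : ℤ) + τ) % (M : ℤ)).toNat))

/-- Aperiodic cross-correlation of two length-`M` complex sequences at integer shift `τ`. -/
noncomputable def acc (M : ℕ) (a b : ℕ → ℂ) (τ : ℤ) : ℂ :=
  if 0 ≤ τ then
    ∑ n ∈ Finset.range (M - τ.toNat), a n * (starRingEnd ℂ) (b (n + τ.toNat))
  else
    ∑ n ∈ Finset.range (M - (-τ).toNat), a (n + (-τ).toNat) * (starRingEnd ℂ) (b n)

/-- Kronecker product of a length-`L` sequence `d` with a length-`N` sequence `x`: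
`(d ⊗ x) (l*N + n) = d l * x n`. -/
def kron (N : ℕ) (d x : ℕ → ℂ) : ℕ → ℂ :=
  fun k => d (k / N) * x (k % N)

/-- `{a_1, …, a_K}` is a `(K, L, Z)` ZCZ sequence set: zero periodic autocorrelation
for `1 ≤ |τ| < Z` and zero periodic cross-correlation for `0 ≤ |τ| < Z`, `i ≠ j`. -/
def IsZCZ (K L Z : ℕ) (a : Fin K → ℕ → ℂ) : Prop :=
  (∀ i : Fin K, ∀ τ : ℤ, 1 ≤ τ.natAbs → τ.natAbs < Z → pcc L (a i) (a i) τ = 0) ∧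
  (∀ i j : Fin K, i ≠ j → ∀ τ : ℤ, τ.natAbs < Z → pcc L (a i) (a j) τ = 0)

lemma kron_eval (N : ℕ) (hN : 0 < N) (d x : ℕ → ℂ) (l n : ℕ) (hn : n < N) :
    kron N d x (N * l + n) = d l * x n := by
  unfold kron
  rw [Nat.mul_add_div hN, Nat.div_eq_of_lt hn, Nat.mul_add_mod, Nat.mod_eq_of_lt hn, Nat.add_zero]

lemma sum_range_mul' (N L : ℕ) (f : ℕ → ℂ) :
    ∑ k ∈ Finset.range (N * L), f k
      = ∑ l ∈ Finset.range L, ∑ n ∈ Finset.range N, f (N * l + n) := by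
  induction L with
  | zero => simp
  | succ L ih =>
    rw [Nat.mul_succ, Finset.sum_range_add, ih, Finset.sum_range_succ]

theorem quasiZCZ_autocorrelation_small_shift
    (K L N Z : ℕ) (hL : 0 < L) (hN : 0 < N) (hZ : 2 ≤ Z)
    (a : Fin K → ℕ → ℂ) (hA : IsZCZ K L Z a)
    (hmod : ∀ i : Fin K, ∀ l < L, ‖a i l‖ = 1)
    (b : Fin K → ℕ → ℂ)
    (c : Fin K → ℕ → ℂ) (hc : ∀ i, c i = kron N (a i) (b i))
    (i : Fin K) (τ : ℕ) (hτ : τ ≤ N - 1) :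
    pcc (N * L) (c i) (c i) (τ : ℤ) = (L : ℂ) * acc N (b i) (b i) (τ : ℤ) := by
  have hτN : τ < N := by omega
  set A := a i with hAdef
  set B := b i with hBdef
  set S1 : ℂ := ∑ n ∈ Finset.range (N - τ), B n * (starRingEnd ℂ) (B (n + τ)) with hS1
  set S2 : ℂ := ∑ j ∈ Finset.range τ, B (N - τ + j) * (starRingEnd ℂ) (B j) with hS2
  have hAl : ∀ l < L, A l * (starRingEnd ℂ) (A l) = 1 := by
    intro l hl
    rw [Complex.mul_conj, Complex.normSq_eq_norm_sq, hmod i l hl]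
    norm_num
  have hcycle : (∑ l ∈ Finset.range L, A l * (starRingEnd ℂ) (A ((l + 1) % L))) = 0 := by
    have h := hA.1 i 1 (by simp) (by omega)
    rw [pcc] at h
    rw [← h]
    apply Finset.sum_congr rfl
    intro l _
    have e : (((l : ℤ) + 1) % (L : ℤ)).toNat = (l + 1) % L := by
      have e' : ((l : ℤ) + 1) % (L : ℤ) = (((l + 1) % L : ℕ) : ℤ) := by push_cast; ring
      rw [e', Int.toNat_natCast]
    rw [e]
  have main : ∀ l ∈ Finset.range L,
      (∑ n ∈ Finset.range N, kron N A B (N * l + n) *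
        (starRingEnd ℂ) (kron N A B ((((N * l + n : ℕ) : ℤ) + (τ : ℤ)) % ((N * L : ℕ) : ℤ)).toNat))
      = (A l * (starRingEnd ℂ) (A l)) * S1
        + (A l * (starRingEnd ℂ) (A ((l + 1) % L))) * S2 := by
    intro l hl
    rw [Finset.mem_range] at hl
    have hsplit := Finset.sum_range_add (fun n => kron N A B (N * l + n) *
        (starRingEnd ℂ) (kron N A B ((((N * l + n : ℕ) : ℤ) + (τ : ℤ)) % ((N * L : ℕ) : ℤ)).toNat))
        (N - τ) τ
    rw [Nat.sub_add_cancel hτN.le] at hsplit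
    rw [hsplit]
    congr 1
    · rw [hS1, Finset.mul_sum]
      apply Finset.sum_congr rfl
      intro n hn
      rw [Finset.mem_range] at hn
      have hnτ : n + τ < N := by omega
      have hlt : N * l + (n + τ) < N * L := by
        have h1 : N * (l + 1) ≤ N * L := Nat.mul_le_mul_left N (by omega)
        have h2 : N * (l + 1) = N * l + N := by ring
        omega
      have e : ((N * l + n : ℕ) : ℤ) + (τ : ℤ) = ((N * l + (n + τ) : ℕ) : ℤ) := by
        push_cast; ring
      rw [e, Int.emod_eq_of_lt (by positivity) (by exact_mod_cast hlt), Int.toNat_natCast]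
      rw [kron_eval N hN A B l n (by omega), kron_eval N hN A B l (n + τ) hnτ, map_mul]
      ring
    · rw [hS2, Finset.mul_sum]
      apply Finset.sum_congr rfl
      intro j hj
      rw [Finset.mem_range] at hj
      have hjN : j < N := by omega
      have hnN : N - τ + j < N := by omega
      have enat : N * l + (N - τ + j) + τ = N * (l + 1) + j := by
        have h2 : N * (l + 1) = N * l + N := by ring
        omega
      have e : ((N * l + (N - τ + j) : ℕ) : ℤ) + (τ : ℤ) = ((N * (l + 1) + j : ℕ) : ℤ) := by
        exact_mod_cast congrArg (fun m : ℕ => (m : ℤ)) enat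
      rw [e]
      by_cases hl1 : l + 1 < L
      · have hlt : N * (l + 1) + j < N * L := by
          have h1 : N * (l + 2) ≤ N * L := Nat.mul_le_mul_left N (by omega)
          have h2 : N * (l + 2) = N * (l + 1) + N := by ring
          omega
        rw [Int.emod_eq_of_lt (by positivity) (by exact_mod_cast hlt), Int.toNat_natCast]
        rw [kron_eval N hN A B l (N - τ + j) hnN, kron_eval N hN A B (l + 1) j hjN,
          Nat.mod_eq_of_lt hl1, map_mul]
        ring
      · have hlL : l + 1 = L := by omega
        have e2 : ((N * (l + 1) + j : ℕ) : ℤ) % ((N * L : ℕ) : ℤ) = (j : ℤ) := by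
          rw [hlL, Nat.cast_add, add_comm, Int.add_emod_right]
          exact Int.emod_eq_of_lt (by positivity)
            (by exact_mod_cast lt_of_lt_of_le hjN (Nat.le_mul_of_pos_right N hL))
        rw [e2, Int.toNat_natCast]
        have : kron N A B j = A 0 * B j := by
          have := kron_eval N hN A B 0 j hjN
          simpa using this
        rw [kron_eval N hN A B l (N - τ + j) hnN, this, hlL, Nat.mod_self, map_mul]
        ring
  rw [hc]
  rw [pcc, sum_range_mul' N L, Finset.sum_congr rfl main, Finset.sum_add_distrib,
    ← Finset.sum_mul, ← Finset.sum_mul, hcycle, zero_mul, add_zero]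
  have hsum1 : (∑ l ∈ Finset.range L, A l * (starRingEnd ℂ) (A l)) = (L : ℂ) := by
    rw [Finset.sum_congr rfl (fun l hl => hAl l (Finset.mem_range.mp hl))]
    simp
  rw [hsum1]
  simp only [acc, if_pos (Int.natCast_nonneg τ), Int.toNat_natCast, hS1]
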